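/- For every integer n ≥ 13, u(n) + (4/3)·C_n > 2·S_n, where u(n) = 4^{n+1}/(3√(π n^3)), C_n is the n-th Catalan number, and S_n is the sum of the first n Catalan numbers. -/

import Mathlib

open Real Filter

noncomputable def C (k : ℕ) : ℝ := (Nat.choose (2 * k) k : ℝ) / ((k : ℝ) + 1)

noncomputable def S (n : ℕ) : ℝ := ∑ k ∈ Finset.Icc 1 n, C k

noncomputable def u (n : ℕ) : ℝ := 4 ^ (n + 1) / (3 * Real.sqrt (π * (n : ℝ) ^ 3))

noncomputable def ϑ (n : ℕ) : ℝ := 4 ^ (n + 1) / (3 * ((n : ℝ) + 1) * Real.sqrt (π * n))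

open Topology in
lemma cbw (n : ℕ) : π * ((n:ℝ) + 1/4) * (Nat.choose (2*n) n : ℝ)^2 ≤ 16 ^ n := by
  set g : ℕ → ℝ := fun m => Real.Wallis.W m * (2*(m:ℝ)+1)/((m:ℝ)+1/4) with hg
  have hanti : Antitone g := by
    apply antitone_nat_of_succ_le
    intro m
    have hw := Real.Wallis.W_pos m
    have hx : (0:ℝ) ≤ (m:ℝ) := m.cast_nonneg
    have h1 : (0:ℝ) < 2*(m:ℝ)+1 := by positivity
    have h3 : (0:ℝ) < 2*(m:ℝ)+3 := by positivity
    have hkey : Real.Wallis.W (m+1) * (2*((m:ℝ)+1)+1) * ((m:ℝ)+1/4)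
        ≤ Real.Wallis.W m * (2*(m:ℝ)+1) * (((m:ℝ)+1)+1/4) := by
      rw [Real.Wallis.W_succ]
      have e : Real.Wallis.W m * ((2 * (m:ℝ) + 2) / (2 * (m:ℝ) + 1) * ((2 * (m:ℝ) + 2) / (2 * (m:ℝ) + 3))) * (2*((m:ℝ)+1)+1) * ((m:ℝ)+1/4)
          = Real.Wallis.W m * ((2*(m:ℝ)+2)*(2*(m:ℝ)+2)*((m:ℝ)+1/4))/(2*(m:ℝ)+1) := by
        field_simp
        ring
      rw [e, div_le_iff₀ h1]
      nlinarith [hw]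
    simp only [g]
    rw [div_le_div_iff₀ (by positivity) (by positivity)]
    push_cast
    push_cast at hkey
    linarith
  have hlim : Tendsto g atTop (𝓝 π) := by
    have h1 : Tendsto (fun m : ℕ => ((m:ℝ)+1/4)) atTop atTop :=
      tendsto_atTop_add_const_right atTop (1/4:ℝ) tendsto_natCast_atTop_atTop
    have h2 : Tendsto (fun m : ℕ => (1/2)/((m:ℝ)+1/4)) atTop (𝓝 0) :=
      tendsto_const_nhds.div_atTop h1
    have h3 : Tendsto (fun m : ℕ => 2 + (1/2)/((m:ℝ)+1/4)) atTop (𝓝 2) := by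
      simpa using h2.const_add 2
    have h4 := Real.Wallis.tendsto_W_nhds_pi_div_two.mul h3
    have h5 : (π/2)*2 = π := by ring
    rw [h5] at h4
    refine h4.congr (fun m => ?_)
    have hm : ((m:ℝ)+1/4) ≠ 0 := by positivity
    simp only [hg]
    field_simp
    ring
  have hπ : π ≤ g n := hanti.le_of_tendsto hlim n
  have hch : (Nat.choose (2*n) n : ℝ) * (n.factorial : ℝ) * (n.factorial :ℝ) = ((2*n).factorial : ℝ) := by
    have h := Nat.choose_mul_factorial_mul_factorial (show n ≤ 2*n by omega)
    have h2 : 2*n - n = n := by omega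
    rw [h2] at h
    exact_mod_cast congrArg (Nat.cast (R := ℝ)) h
  have hfne : ((2*n).factorial : ℝ) ≠ 0 := by positivity
  have hW : Real.Wallis.W n * (2*(n:ℝ)+1) = 16^n * (n.factorial : ℝ)^4 / ((2*n).factorial : ℝ)^2 := by
    rw [Real.Wallis.W_eq_factorial_ratio]
    have h1 : ((2*n:ℕ):ℝ) + 1 = 2*(n:ℝ)+1 := by push_cast; ring
    field_simp
    rw [show (16:ℝ) = 2^4 by norm_num, ← pow_mul]
  have hpos : (0:ℝ) < (n:ℝ)+1/4 := by positivity
  calc π * ((n:ℝ) + 1/4) * (Nat.choose (2*n) n : ℝ)^2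
      ≤ g n * ((n:ℝ) + 1/4) * (Nat.choose (2*n) n : ℝ)^2 := by
        apply mul_le_mul_of_nonneg_right (mul_le_mul_of_nonneg_right hπ hpos.le) (by positivity)
    _ = (Real.Wallis.W n * (2*(n:ℝ)+1)) * (Nat.choose (2*n) n : ℝ)^2 := by
        simp only [hg]; field_simp
    _ = 16^n * ((Nat.choose (2*n) n : ℝ) * (n.factorial : ℝ) * (n.factorial :ℝ))^2 / ((2*n).factorial : ℝ)^2 := by
        rw [hW]; ring
    _ = 16^n := by rw [hch]; field_simp

lemma cb_le (n : ℕ) : (Nat.choose (2*n) n : ℝ) * Real.sqrt (π*((n:ℝ)+1/4)) ≤ 4 ^ n := by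
  have h0 : (0:ℝ) ≤ π*((n:ℝ)+1/4) := by positivity
  have hx : (0:ℝ) ≤ (Nat.choose (2*n) n : ℝ) * Real.sqrt (π*((n:ℝ)+1/4)) := by positivity
  have hsq : ((Nat.choose (2*n) n : ℝ) * Real.sqrt (π*((n:ℝ)+1/4)))^2 ≤ ((4:ℝ)^n)^2 := by
    rw [mul_pow, Real.sq_sqrt h0, show ((4:ℝ)^n)^2 = 16^n by
      rw [show (16:ℝ) = 4^2 by norm_num, ← pow_mul, ← pow_mul, Nat.mul_comm]]
    calc (Nat.choose (2*n) n : ℝ)^2 * (π*((n:ℝ)+1/4)) = π * ((n:ℝ) + 1/4) * (Nat.choose (2*n) n : ℝ)^2 := by ring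
      _ ≤ 16^n := cbw n
  calc (Nat.choose (2*n) n : ℝ) * Real.sqrt (π*((n:ℝ)+1/4))
      = Real.sqrt (((Nat.choose (2*n) n : ℝ) * Real.sqrt (π*((n:ℝ)+1/4)))^2) := (Real.sqrt_sq hx).symm
    _ ≤ Real.sqrt (((4:ℝ)^n)^2) := Real.sqrt_le_sqrt hsq
    _ = 4^n := Real.sqrt_sq (by positivity)

set_option maxHeartbeats 1000000 in
lemma key (k : ℝ) (hk : 14 ≤ k) :
    6*k/((k+1)*(2*k-1)*Real.sqrt (k+1/4)) ≤ 4/Real.sqrt (k^3) - 1/Real.sqrt ((k-1)^3) := by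
  have hk0 : (0:ℝ) < k := by linarith
  have hk1 : (0:ℝ) < k - 1 := by linarith
  have hkq : (0:ℝ) < k + 1/4 := by linarith
  set a := Real.sqrt k with ha
  set b := Real.sqrt (k-1) with hb
  set c := Real.sqrt (k+1/4) with hc
  have ha0 : 0 < a := Real.sqrt_pos.mpr hk0
  have hb0 : 0 < b := Real.sqrt_pos.mpr hk1
  have hc0 : 0 < c := Real.sqrt_pos.mpr hkq
  have ha2 : a^2 = k := Real.sq_sqrt hk0.le
  have hb2 : b^2 = k-1 := Real.sq_sqrt hk1.le
  have hc2 : c^2 = k+1/4 := Real.sq_sqrt hkq.le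
  have hsk3 : Real.sqrt (k^3) = k * a := by
    rw [show k^3 = (k^2)*k by ring, Real.sqrt_mul (by positivity), Real.sqrt_sq hk0.le]
  have hsk13 : Real.sqrt ((k-1)^3) = (k-1) * b := by
    rw [show (k-1)^3 = ((k-1)^2)*(k-1) by ring, Real.sqrt_mul (by positivity), Real.sqrt_sq hk1.le]
  have hab : a * b ≤ k - 1/2 := by
    rw [ha, hb, ← Real.sqrt_mul hk0.le]
    calc Real.sqrt (k*(k-1)) ≤ Real.sqrt ((k-1/2)^2) := by
          apply Real.sqrt_le_sqrt; nlinarith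
      _ = k - 1/2 := Real.sqrt_sq (by linarith)
  have habpos : 0 < a * b := mul_pos ha0 hb0
  -- main cross-multiplied inequality
  have hN : k * a < 4 * ((k-1) * b) := by
    have h1 : Real.sqrt (k^3) < Real.sqrt (16*(k-1)^3) := by
      apply Real.sqrt_lt_sqrt (by positivity)
      nlinarith [hk, sq_nonneg (k-14), mul_nonneg (sq_nonneg (k-14)) (show (0:ℝ) ≤ k-14 by linarith)]
    rw [hsk3] at h1
    rw [show (16:ℝ)*(k-1)^3 = (4*((k-1)))^2*(k-1) by ring, Real.sqrt_mul (by positivity),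
      Real.sqrt_sq (by linarith)] at h1
    linarith [h1]
  set L := 6*k*((k*a)*((k-1)*b)) with hL
  set R := (4*((k-1)*b) - k*a)*((k+1)*(2*k-1)*c) with hR
  have hLpos : 0 < L := by positivity
  have hRpos : 0 < R := by
    exact mul_pos (by linarith) (mul_pos (mul_pos (by linarith) (by linarith)) hc0)
  have ht : 0 ≤ k - 14 := by linarith
  have hsq : L^2 ≤ R^2 := by
    have e1 : L^2 = 36*k^2 * (k^2*(a^2)) * ((k-1)^2*(b^2)) := by ring
    have e2 : R^2 = (16*(k-1)^2*b^2 + k^2*a^2 - 8*(k*(k-1))*(a*b)) * ((k+1)^2*(2*k-1)^2*(c^2)) := by ring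
    rw [e1, e2, ha2, hb2, hc2]
    have hP : 36*k^2*(k^2*k)*((k-1)^2*(k-1)) ≤
        (16*(k-1)^2*(k-1) + k^2*k - 8*(k*(k-1))*(k-1/2)) * ((k+1)^2*(2*k-1)^2*(k+1/4)) := by
      nlinarith [pow_nonneg ht 7, pow_nonneg ht 6, pow_nonneg ht 5, pow_nonneg ht 4,
        pow_nonneg ht 3, pow_nonneg ht 2, ht]
    have hmul : (0:ℝ) ≤ 8*(k*(k-1)) := by nlinarith
    nlinarith [mul_le_mul_of_nonneg_left hab hmul,
      mul_pos (mul_pos (pow_pos (show (0:ℝ) < k+1 by linarith) 2) (pow_pos (show (0:ℝ) < 2*k-1 by linarith) 2)) hkq]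
  have hLR : L ≤ R := by
    calc L = Real.sqrt (L^2) := (Real.sqrt_sq hLpos.le).symm
      _ ≤ Real.sqrt (R^2) := Real.sqrt_le_sqrt hsq
      _ = R := Real.sqrt_sq hRpos.le
  -- convert back
  rw [hsk3, hsk13]
  have e3 : 4/(k*a) - 1/((k-1)*b) = (4*((k-1)*b) - k*a)/((k*a)*((k-1)*b)) := by
    field_simp
  rw [e3, div_le_div_iff₀ (mul_pos (mul_pos (show (0:ℝ)<k+1 by linarith) (show (0:ℝ)<2*k-1 by linarith)) hc0) (by positivity)]
  calc 6*k*((k*a)*((k-1)*b)) = L := by rw [hL]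
    _ ≤ R := hLR
    _ = (4*((k-1)*b) - k*a)*((k+1)*(2*k-1)*c) := by rw [hR]

lemma hSsucc (n : ℕ) : S (n+1) = S n + C (n+1) := by
  rw [S, S, Finset.sum_Icc_succ_top (by omega : 1 ≤ n+1)]

lemma hCcb (k : ℕ) : C k = (Nat.centralBinom k : ℝ) / ((k:ℝ)+1) := rfl

lemma step (n : ℕ) (hn : 13 ≤ n) : 2/3*C (n+1) + 4/3*C n ≤ u (n+1) - u n := by
  obtain ⟨k, hkd⟩ : ∃ k : ℝ, k = (n:ℝ)+1 := ⟨_, rfl⟩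
  obtain ⟨A, hAd⟩ : ∃ A : ℝ, A = (Nat.choose (2*n) n : ℝ) := ⟨_, rfl⟩
  obtain ⟨B, hBd⟩ : ∃ B : ℝ, B = (Nat.choose (2*(n+1)) (n+1) : ℝ) := ⟨_, rfl⟩
  have hnk : (n:ℝ) = k-1 := by rw [hkd]; ring
  have hk : 14 ≤ k := by
    have : (13:ℝ) ≤ (n:ℝ) := by exact_mod_cast hn
    rw [hkd]; linarith
  have hk0 : (0:ℝ) < k := by linarith
  have hk1 : (0:ℝ) < k-1 := by linarith
  have hkq : (0:ℝ) < k+1/4 := by linarith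
  have hB0 : 0 ≤ B := by rw [hBd]; positivity
  have hrec : k * B = 2*(2*k-1) * A := by
    have h := Nat.succ_mul_centralBinom_succ n
    have h2 : ((n+1) * Nat.centralBinom (n+1) : ℕ) = ((2*(2*n+1)* Nat.centralBinom n : ℕ)) := h
    have h3 : ((n:ℝ)+1) * (Nat.centralBinom (n+1) : ℝ) = 2*(2*(n:ℝ)+1)*(Nat.centralBinom n : ℝ) := by
      exact_mod_cast congrArg (Nat.cast (R := ℝ)) h2
    have e1 : (Nat.centralBinom (n+1) : ℝ) = B := by rw [hBd]; rfl
    have e2 : (Nat.centralBinom n : ℝ) = A := by rw [hAd]; rfl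
    rw [e1, e2, hnk] at h3
    linear_combination h3
  have hne1 : k+1 ≠ 0 := by positivity
  have hne2 : 2*k-1 ≠ 0 := by intro h; rw [sub_eq_zero] at h; nlinarith
  have hCn : C n = B/(2*(2*k-1)) := by
    have h1 : C n = A/k := by rw [C, ← hAd, hnk]; ring
    rw [h1]
    rw [div_eq_div_iff hk0.ne' (by positivity)]
    linear_combination -hrec
  have hCn1 : C (n+1) = B/(k+1) := by
    rw [C, ← hBd]
    have : ((n+1:ℕ):ℝ)+1 = k+1 := by push_cast; rw [hnk]; ring
    rw [this]
  have hcomb : 2/3*C (n+1) + 4/3*C n = (2*k/((k+1)*(2*k-1)))*B := by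
    rw [hCn, hCn1]
    field_simp
    ring
  have hsπ : (0:ℝ) < Real.sqrt π := Real.sqrt_pos.mpr pi_pos
  have hsq : (0:ℝ) < Real.sqrt (k+1/4) := Real.sqrt_pos.mpr hkq
  have hsk3 : (0:ℝ) < Real.sqrt (k^3) := Real.sqrt_pos.mpr (by positivity)
  have hsk13 : (0:ℝ) < Real.sqrt ((k-1)^3) := Real.sqrt_pos.mpr (by positivity)
  have hBb : B ≤ 4^(n+1)/(Real.sqrt π * Real.sqrt (k+1/4)) := by
    have h := cb_le (n+1)
    have e : π*(((n+1:ℕ):ℝ)+1/4) = π*(k+1/4) := by push_cast; rw [hnk]; ring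
    rw [e, Real.sqrt_mul pi_pos.le, ← hBd] at h
    rw [le_div_iff₀ (by positivity)]
    exact h
  have hu1 : u (n+1) = 4*4^(n+1)/(3*(Real.sqrt π * Real.sqrt (k^3))) := by
    rw [u, ← Real.sqrt_mul pi_pos.le]
    have e1 : ((n+1:ℕ):ℝ)^3 = k^3 := by push_cast; rw [hnk]; ring
    rw [e1, pow_succ]
    ring_nf
  have hu0 : u n = 4^(n+1)/(3*(Real.sqrt π * Real.sqrt ((k-1)^3))) := by
    rw [u, ← Real.sqrt_mul pi_pos.le]
    have e1 : ((n:ℕ):ℝ)^3 = (k-1)^3 := by rw [hnk]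
    rw [e1]
  have hkey := key k hk
  obtain ⟨sp, hspd⟩ : ∃ x:ℝ, x = Real.sqrt π := ⟨_, rfl⟩
  obtain ⟨sq, hsqd⟩ : ∃ x:ℝ, x = Real.sqrt (k+1/4) := ⟨_, rfl⟩
  obtain ⟨s3, hs3d⟩ : ∃ x:ℝ, x = Real.sqrt (k^3) := ⟨_, rfl⟩
  obtain ⟨s13, hs13d⟩ : ∃ x:ℝ, x = Real.sqrt ((k-1)^3) := ⟨_, rfl⟩
  rw [← hspd] at hBb hu1 hu0 hsπ
  rw [← hsqd] at hBb hkey hsq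
  rw [← hs3d] at hu1 hkey hsk3
  rw [← hs13d] at hu0 hkey hsk13
  have hsp' : sp ≠ 0 := hsπ.ne'
  have hsq' : sq ≠ 0 := hsq.ne'
  have hs3' : s3 ≠ 0 := hsk3.ne'
  have hs13' : s13 ≠ 0 := hsk13.ne'
  calc 2/3*C (n+1) + 4/3*C n = (2*k/((k+1)*(2*k-1)))*B := hcomb
    _ ≤ (2*k/((k+1)*(2*k-1)))*(4^(n+1)/(sp * sq)) := by
        apply mul_le_mul_of_nonneg_left hBb
        have h2k : (0:ℝ) < 2*k-1 := by linarith
        positivity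
    _ = (4^(n+1)/(3*sp)) * (6*k/((k+1)*(2*k-1)*sq)) := by
        field_simp
        ring
    _ ≤ (4^(n+1)/(3*sp)) * (4/s3 - 1/s13) := by
        apply mul_le_mul_of_nonneg_left hkey
        positivity
    _ = u (n+1) - u n := by
        rw [hu1, hu0]
        field_simp
lemma base13 : u 13 + 4/3 * C 13 > 2 * S 13 := by
  have e1 : Nat.centralBinom 1 = 2 := by decide
  have e2 : Nat.centralBinom 2 = 6 := by
    have h := Nat.succ_mul_centralBinom_succ 1; rw [e1] at h; norm_num at h; omega
  have e3 : Nat.centralBinom 3 = 20 := by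
    have h := Nat.succ_mul_centralBinom_succ 2; rw [e2] at h; norm_num at h; omega
  have e4 : Nat.centralBinom 4 = 70 := by
    have h := Nat.succ_mul_centralBinom_succ 3; rw [e3] at h; norm_num at h; omega
  have e5 : Nat.centralBinom 5 = 252 := by
    have h := Nat.succ_mul_centralBinom_succ 4; rw [e4] at h; norm_num at h; omega
  have e6 : Nat.centralBinom 6 = 924 := by
    have h := Nat.succ_mul_centralBinom_succ 5; rw [e5] at h; norm_num at h; omega
  have e7 : Nat.centralBinom 7 = 3432 := by
    have h := Nat.succ_mul_centralBinom_succ 6; rw [e6] at h; norm_num at h; omega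
  have e8 : Nat.centralBinom 8 = 12870 := by
    have h := Nat.succ_mul_centralBinom_succ 7; rw [e7] at h; norm_num at h; omega
  have e9 : Nat.centralBinom 9 = 48620 := by
    have h := Nat.succ_mul_centralBinom_succ 8; rw [e8] at h; norm_num at h; omega
  have e10 : Nat.centralBinom 10 = 184756 := by
    have h := Nat.succ_mul_centralBinom_succ 9; rw [e9] at h; norm_num at h; omega
  have e11 : Nat.centralBinom 11 = 705432 := by
    have h := Nat.succ_mul_centralBinom_succ 10; rw [e10] at h; norm_num at h; omega
  have e12 : Nat.centralBinom 12 = 2704156 := by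
    have h := Nat.succ_mul_centralBinom_succ 11; rw [e11] at h; norm_num at h; omega
  have e13 : Nat.centralBinom 13 = 10400600 := by
    have h := Nat.succ_mul_centralBinom_succ 12; rw [e12] at h; norm_num at h; omega
  have hC1 : C 1 = 1 := by rw [hCcb, e1]; norm_num
  have hC2 : C 2 = 2 := by rw [hCcb, e2]; norm_num
  have hC3 : C 3 = 5 := by rw [hCcb, e3]; norm_num
  have hC4 : C 4 = 14 := by rw [hCcb, e4]; norm_num
  have hC5 : C 5 = 42 := by rw [hCcb, e5]; norm_num
  have hC6 : C 6 = 132 := by rw [hCcb, e6]; norm_num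
  have hC7 : C 7 = 429 := by rw [hCcb, e7]; norm_num
  have hC8 : C 8 = 1430 := by rw [hCcb, e8]; norm_num
  have hC9 : C 9 = 4862 := by rw [hCcb, e9]; norm_num
  have hC10 : C 10 = 16796 := by rw [hCcb, e10]; norm_num
  have hC11 : C 11 = 58786 := by rw [hCcb, e11]; norm_num
  have hC12 : C 12 = 208012 := by rw [hCcb, e12]; norm_num
  have hC13 : C 13 = 742900 := by rw [hCcb, e13]; norm_num
  have hS0 : S 0 = 0 := by rw [S]; simp
  have hS1 : S 1 = 1 := by rw [show (1:ℕ) = 0+1 from rfl, hSsucc, hS0, hC1]; norm_num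
  have hS2 : S 2 = 3 := by rw [show S 2 = S (1+1) from rfl, hSsucc, hS1, hC2]; norm_num
  have hS3 : S 3 = 8 := by rw [show S 3 = S (2+1) from rfl, hSsucc, hS2, hC3]; norm_num
  have hS4 : S 4 = 22 := by rw [show S 4 = S (3+1) from rfl, hSsucc, hS3, hC4]; norm_num
  have hS5 : S 5 = 64 := by rw [show S 5 = S (4+1) from rfl, hSsucc, hS4, hC5]; norm_num
  have hS6 : S 6 = 196 := by rw [show S 6 = S (5+1) from rfl, hSsucc, hS5, hC6]; norm_num
  have hS7 : S 7 = 625 := by rw [show S 7 = S (6+1) from rfl, hSsucc, hS6, hC7]; norm_num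
  have hS8 : S 8 = 2055 := by rw [show S 8 = S (7+1) from rfl, hSsucc, hS7, hC8]; norm_num
  have hS9 : S 9 = 6917 := by rw [show S 9 = S (8+1) from rfl, hSsucc, hS8, hC9]; norm_num
  have hS10 : S 10 = 23713 := by rw [show S 10 = S (9+1) from rfl, hSsucc, hS9, hC10]; norm_num
  have hS11 : S 11 = 82499 := by rw [show S 11 = S (10+1) from rfl, hSsucc, hS10, hC11]; norm_num
  have hS12 : S 12 = 290511 := by rw [show S 12 = S (11+1) from rfl, hSsucc, hS11, hC12]; norm_num
  have hS13 : S 13 = 1033411 := by rw [show S 13 = S (12+1) from rfl, hSsucc, hS12, hC13]; norm_num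
  rw [hS13, hC13, u]
  have h2197 : π * ((13:ℕ):ℝ)^3 = π * 2197 := by norm_num
  rw [h2197]
  have hsq : Real.sqrt (π*2197) < 83.079 := by
    rw [show (83.079:ℝ) = Real.sqrt (83.079^2) from (Real.sqrt_sq (by norm_num)).symm]
    apply Real.sqrt_lt_sqrt (by positivity)
    nlinarith [Real.pi_lt_d6]
  have hsq0 : 0 < Real.sqrt (π*2197) := Real.sqrt_pos.mpr (by positivity)
  have h1 : (1076288.67:ℝ) < 4 ^ (13 + 1) / (3 * Real.sqrt (π * 2197)) := by
    rw [lt_div_iff₀ (by positivity)]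
    nlinarith [hsq, hsq0]
  nlinarith [h1]

theorem stmt10 (n : ℕ) (hn : 13 ≤ n) : u n + 4 / 3 * C n > 2 * S n := by
  induction n, hn using Nat.le_induction with
  | base => exact base13
  | succ n hn ih =>
    have hstep := step n hn
    have hS : S (n+1) = S n + C (n+1) := hSsucc n
    rw [hS]
    linarith
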